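/- Let X_N be exchangeable {0,1}-valued with γ = ΣX_i. If γ is 2nd-order tighter than the Binomial, i.e., P(γ=i)^2/(P(γ=i+1)P(γ=i-1)) > (i+1)(N-i+1)/(i(N-i)) for all 1 ≤ i ≤ N-1, then belief in maturity holds: the probability P(X_{n+1}=1 | X_1=0,...,X_n=0) is strictly increasing in n for 0 ≤ n ≤ N-1 (where positive probability of the conditioning event is assumed). -/

import Mathlib

open Finset

/-- number of 1's (trues) in a 0-1 vector -/
def cnt {n : ℕ} (x : Fin n → Bool) : ℕ := (Finset.univ.filter fun i => x i = true).card

/-- P(γ = k): probability that the total count of 1's equals k -/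
def gam (N : ℕ) (p : (Fin N → Bool) → ℝ) (k : ℕ) : ℝ :=
  ∑ y : Fin N → Bool, if cnt y = k then p y else 0

/-- P(X_1 = x_1, ..., X_n = x_n): probability of observing the prefix x -/
def pref (N : ℕ) (p : (Fin N → Bool) → ℝ) {n : ℕ} (hn : n ≤ N) (x : Fin n → Bool) : ℝ :=
  ∑ y : Fin N → Bool, if (∀ i : Fin n, y (Fin.castLE hn i) = x i) then p y else 0

/-! ### Auxiliary definitions -/

/-- the common value of `p` on vectors with exactly `k` ones -/
def tf (N : ℕ) (p : (Fin N → Bool) → ℝ) (k : ℕ) : ℝ := p (fun i => decide ((i : ℕ) < k))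

/-- sum of `tf (cnt s + j)` over all 0-1 vectors `s` of length `l` -/
def Ssum (N : ℕ) (p : (Fin N → Bool) → ℝ) (l j : ℕ) : ℝ :=
  ∑ s : Fin l → Bool, tf N p (cnt s + j)

/-! ### Basic counting lemmas -/

lemma cnt_eq_sum {n : ℕ} (x : Fin n → Bool) :
    cnt x = ∑ i, (if x i = true then 1 else 0) := Finset.card_filter _ _

lemma cnt_cons {n : ℕ} (b : Bool) (s : Fin n → Bool) :
    cnt (Fin.cons b s) = (cond b 1 0) + cnt s := by
  rw [cnt_eq_sum, cnt_eq_sum, Fin.sum_univ_succ]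
  simp only [Fin.cons_zero, Fin.cons_succ]
  cases b <;> simp

lemma cnt_const_false {n : ℕ} : cnt (fun _ => false : Fin n → Bool) = 0 := by
  simp [cnt]

lemma cnt_snoc {n : ℕ} (x : Fin n → Bool) (b : Bool) :
    cnt (Fin.snoc x b) = cnt x + (cond b 1 0) := by
  rw [cnt_eq_sum, cnt_eq_sum, Fin.sum_univ_castSucc]
  simp only [Fin.snoc_castSucc, Fin.snoc_last]
  cases b <;> simp

lemma cnt_le {n : ℕ} (x : Fin n → Bool) : cnt x ≤ n := by
  classical
  calc cnt x ≤ (univ : Finset (Fin n)).card := Finset.card_filter_le _ _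
  _ = n := by simp

lemma cnt_threshold {N k : ℕ} (hk : k ≤ N) :
    cnt (fun i : Fin N => decide ((i : ℕ) < k)) = k := by
  classical
  unfold cnt
  simp only [decide_eq_true_eq]
  rw [← Finset.card_range k]
  apply Finset.card_bij (fun (a : Fin N) _ => (a : ℕ))
  · intro a ha
    simp only [mem_filter] at ha
    simpa using ha.2
  · intro a _ b _ hab
    exact Fin.ext hab
  · intro b hb
    simp only [mem_range] at hb
    exact ⟨⟨b, lt_of_lt_of_le hb hk⟩, by simpa using hb, rfl⟩

/-! ### Exchangeability: `p` factors through `cnt` -/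

lemma exists_perm {N : ℕ} (y z : Fin N → Bool) (h : cnt y = cnt z) :
    ∃ σ : Equiv.Perm (Fin N), y ∘ σ = z := by
  classical
  have h1 : Fintype.card {i // z i = true} = Fintype.card {i // y i = true} := by
    rw [Fintype.card_subtype, Fintype.card_subtype]
    exact h.symm
  have h2 : Fintype.card {i // ¬ z i = true} = Fintype.card {i // ¬ y i = true} := by
    rw [Fintype.card_subtype_compl, Fintype.card_subtype_compl, h1]
  let e1 := Fintype.equivOfCardEq h1
  let e2 := Fintype.equivOfCardEq h2
  refine ⟨(Equiv.sumCompl (fun i => z i = true)).symm.trans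
    ((Equiv.sumCongr e1 e2).trans (Equiv.sumCompl (fun i => y i = true))), ?_⟩
  funext i
  by_cases hz : z i = true
  · have hs : (Equiv.sumCompl (fun i => z i = true)).symm i = Sum.inl ⟨i, hz⟩ :=
      Equiv.sumCompl_symm_apply_of_pos (p := fun i => z i = true) hz
    simp only [Function.comp_apply, Equiv.trans_apply, hs, Equiv.sumCongr_apply,
      Sum.map_inl, Equiv.sumCompl_apply_inl]
    rw [(e1 ⟨i, hz⟩).2, hz]
  · have hs : (Equiv.sumCompl (fun i => z i = true)).symm i = Sum.inr ⟨i, hz⟩ :=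
      Equiv.sumCompl_symm_apply_of_neg (p := fun i => z i = true) hz
    simp only [Function.comp_apply, Equiv.trans_apply, hs, Equiv.sumCongr_apply,
      Sum.map_inr, Equiv.sumCompl_apply_inr]
    have := (e2 ⟨i, hz⟩).2
    simp only [Bool.not_eq_true] at this hz
    rw [this, hz]

lemma p_eq {N : ℕ} (p : (Fin N → Bool) → ℝ)
    (hexch : ∀ σ : Equiv.Perm (Fin N), ∀ y : Fin N → Bool, p (y ∘ σ) = p y)
    (y : Fin N → Bool) : p y = tf N p (cnt y) := by
  obtain ⟨σ, hσ⟩ := exists_perm (fun i : Fin N => decide ((i : ℕ) < cnt y)) y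
    (by rw [cnt_threshold (cnt_le y)])
  conv_lhs => rw [← hσ]
  rw [hexch]
  rfl

/-! ### Sum splitting -/

lemma Ssum_succ (N : ℕ) (p : (Fin N → Bool) → ℝ) (l j : ℕ) :
    Ssum N p (l+1) j = Ssum N p l j + Ssum N p l (j+1) := by
  unfold Ssum
  rw [← Fintype.sum_equiv (Fin.consEquiv (fun _ : Fin (l+1) => Bool))
    (fun bs : Bool × (Fin l → Bool) => tf N p (cnt (Fin.cons bs.1 bs.2) + j))
    (fun s => tf N p (cnt s + j)) (fun bs => rfl)]
  rw [Fintype.sum_prod_type]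
  rw [Fintype.sum_bool]
  simp only [cnt_cons, Bool.cond_true, Bool.cond_false]
  rw [add_comm]
  congr 1
  · apply Finset.sum_congr rfl; intro s _; congr 1; omega
  · apply Finset.sum_congr rfl; intro s _; congr 1; omega

lemma Ssum_zero (N : ℕ) (p : (Fin N → Bool) → ℝ) (j : ℕ) : Ssum N p 0 j = tf N p j := by
  unfold Ssum
  rw [Fintype.sum_unique]
  congr 1
  simp [cnt]

/-! ### Counting vectors with a given number of ones -/

lemma card_cnt (N k : ℕ) :
    (Finset.univ.filter fun y : Fin N → Bool => cnt y = k).card = N.choose k := by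
  classical
  have : N.choose k = (Finset.powersetCard k (univ : Finset (Fin N))).card := by
    rw [Finset.card_powersetCard]; simp
  rw [this]
  apply Finset.card_bij (fun (y : Fin N → Bool) _ => Finset.univ.filter fun i => y i = true)
  · intro y hy
    simp only [mem_filter] at hy
    rw [Finset.mem_powersetCard]
    exact ⟨Finset.subset_univ _, hy.2⟩
  · intro a ha b hb hab
    funext i
    simp only [Finset.ext_iff, mem_filter, mem_univ, true_and] at hab
    have := hab i
    cases h1 : a i <;> cases h2 : b i <;> simp [h1, h2] at this ⊢
  · intro s hs
    rw [Finset.mem_powersetCard] at hs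
    refine ⟨fun i => decide (i ∈ s), ?_, ?_⟩
    · rw [mem_filter]; simp only [mem_filter, mem_univ, true_and, cnt]
      rw [← hs.2]
      congr 1
      ext i; simp
    · ext i; simp

lemma gam_eq {N : ℕ} (p : (Fin N → Bool) → ℝ)
    (hexch : ∀ σ : Equiv.Perm (Fin N), ∀ y : Fin N → Bool, p (y ∘ σ) = p y) (k : ℕ) :
    gam N p k = (N.choose k : ℝ) * tf N p k := by
  classical
  unfold gam
  rw [← Finset.sum_filter]
  rw [Finset.sum_congr rfl (fun y hy => by
    rw [p_eq p hexch y, (Finset.mem_filter.mp hy).2])]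
  rw [Finset.sum_const, card_cnt]
  simp [nsmul_eq_mul]

/-! ### Rewriting `pref` as a suffix sum -/

lemma cnt_split (N n : ℕ) (hn : n ≤ N) (y : Fin N → Bool) (x : Fin n → Bool)
    (hF : ∀ i : Fin n, y (Fin.castLE hn i) = x i) :
    cnt y = cnt (fun j : Fin (N-n) => y ⟨n + (j : ℕ), by have := j.isLt; omega⟩) + cnt x := by
  classical
  unfold cnt
  rw [← Finset.card_filter_add_card_filter_not
    (s := Finset.univ.filter fun i : Fin N => y i = true) (p := fun i => n ≤ (i : ℕ))]
  congr 1
  · apply Finset.card_bij (fun (a : Fin N) (ha : a ∈ ((Finset.univ.filter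
        fun i : Fin N => y i = true).filter fun i : Fin N => n ≤ (i : ℕ))) =>
      (⟨(a : ℕ) - n, by
        simp only [mem_filter, mem_univ, true_and] at ha
        have := a.isLt; omega⟩ : Fin (N - n)))
    · intro a ha
      simp only [mem_filter, mem_univ, true_and] at ha ⊢
      obtain ⟨hay, hna⟩ := ha
      have hval : (⟨n + ((a : ℕ) - n), by have := a.isLt; omega⟩ : Fin N) = a :=
        Fin.ext (show n + ((a : ℕ) - n) = (a : ℕ) by omega)
      rw [hval]
      exact hay
    · intro a ha b hb hab
      simp only [mem_filter, mem_univ, true_and] at ha hb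
      rw [Fin.mk.injEq] at hab
      exact Fin.ext (by omega)
    · intro b hb
      simp only [mem_filter, mem_univ, true_and] at hb
      refine ⟨⟨n + (b : ℕ), by have := b.isLt; omega⟩, ?_, ?_⟩
      · simp only [mem_filter, mem_univ, true_and]
        exact ⟨hb, by omega⟩
      · exact Fin.ext (show n + (b : ℕ) - n = (b : ℕ) by omega)
  · apply Finset.card_bij (fun (a : Fin N) (ha : a ∈ ((Finset.univ.filter
        fun i : Fin N => y i = true).filter fun i : Fin N => ¬ n ≤ (i : ℕ))) =>
      (⟨(a : ℕ), by
        simp only [mem_filter, mem_univ, true_and, not_le] at ha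
        exact ha.2⟩ : Fin n))
    · intro a ha
      simp only [mem_filter, mem_univ, true_and, not_le] at ha ⊢
      obtain ⟨hay, hna⟩ := ha
      rw [← hF ⟨(a : ℕ), hna⟩]
      have : Fin.castLE hn (⟨(a : ℕ), hna⟩ : Fin n) = a := Fin.ext rfl
      rw [this]
      exact hay
    · intro a ha b hb hab
      rw [Fin.mk.injEq] at hab
      exact Fin.ext hab
    · intro b hb
      simp only [mem_filter, mem_univ, true_and] at hb
      refine ⟨Fin.castLE hn b, ?_, ?_⟩
      · simp only [mem_filter, mem_univ, true_and, not_le]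
        constructor
        · rw [hF b]; exact hb
        · exact b.isLt
      · exact Fin.ext rfl

lemma pref_eq_Ssum {N : ℕ} (p : (Fin N → Bool) → ℝ)
    (hexch : ∀ σ : Equiv.Perm (Fin N), ∀ y : Fin N → Bool, p (y ∘ σ) = p y)
    {n : ℕ} (hn : n ≤ N) (x : Fin n → Bool) :
    pref N p hn x = Ssum N p (N - n) (cnt x) := by
  classical
  unfold pref Ssum
  rw [← Finset.sum_filter]
  apply Finset.sum_bij (fun (y : Fin N → Bool) (hy : y ∈ Finset.univ.filter
      fun y : Fin N → Bool => ∀ i : Fin n, y (Fin.castLE hn i) = x i) =>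
    fun j : Fin (N - n) => y ⟨n + (j : ℕ), by have := j.isLt; omega⟩)
  · intro y hy
    exact Finset.mem_univ _
  · intro y1 hy1 y2 hy2 hs
    simp only [mem_filter, mem_univ, true_and] at hy1 hy2
    funext i
    by_cases h : (i : ℕ) < n
    · have h1 : Fin.castLE hn (⟨(i : ℕ), h⟩ : Fin n) = i := Fin.ext rfl
      rw [← h1, hy1, hy2]
    · have hij := congrFun hs ⟨(i : ℕ) - n, by have := i.isLt; omega⟩
      simp only [] at hij
      have hval : (⟨n + ((i : ℕ) - n), by have := i.isLt; omega⟩ : Fin N) = i :=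
        Fin.ext (show n + ((i : ℕ) - n) = (i : ℕ) by omega)
      rwa [hval] at hij
  · intro s _
    refine ⟨fun i : Fin N => if h : (i : ℕ) < n then x ⟨(i : ℕ), h⟩
      else s ⟨(i : ℕ) - n, by have := i.isLt; omega⟩, ?_, ?_⟩
    · simp only [mem_filter, mem_univ, true_and]
      intro i
      have h : ((Fin.castLE hn i : Fin N) : ℕ) < n := i.isLt
      rw [dif_pos h]
      exact congrArg x (Fin.eta _ _)
    · funext j
      have h : ¬ ((n + (j : ℕ)) < n) := by omega
      simp only []
      rw [dif_neg h]
      congr 1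
      exact Fin.ext (show n + (j : ℕ) - n = (j : ℕ) by omega)
  · intro y hy
    simp only [mem_filter, mem_univ, true_and] at hy
    rw [p_eq p hexch y, cnt_split N n hn y x hy]

/-! ### Consequences of the second-order tightness hypothesis -/

section Main
variable {N : ℕ} {p : (Fin N → Bool) → ℝ}
  (hnn : ∀ y, 0 ≤ p y)
  (hexch : ∀ σ : Equiv.Perm (Fin N), ∀ y : Fin N → Bool, p (y ∘ σ) = p y)
  (h2nd : ∀ i : ℕ, 1 ≤ i → i ≤ N - 1 →
      gam N p i ^ 2 / (gam N p (i + 1) * gam N p (i - 1)) >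
        (((i + 1) * (N - i + 1) : ℕ) : ℝ) / ((i * (N - i) : ℕ) : ℝ))

include hnn in
lemma gam_nonneg (k : ℕ) : 0 ≤ gam N p k := by
  apply Finset.sum_nonneg
  intro y _
  by_cases h : cnt y = k <;> simp [h, hnn y]

include hnn h2nd in
lemma hpp (i : ℕ) (h1 : 1 ≤ i) (h2 : i ≤ N - 1) : 0 < gam N p (i+1) * gam N p (i-1) := by
  have h := h2nd i h1 h2
  have hrhs : (0:ℝ) < (((i + 1) * (N - i + 1) : ℕ) : ℝ) / ((i * (N - i) : ℕ) : ℝ) := by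
    apply div_pos <;> { rw [Nat.cast_pos]; apply Nat.mul_pos <;> omega }
  rcases (mul_nonneg (gam_nonneg hnn (i+1)) (gam_nonneg hnn (i-1))).lt_or_eq with hlt | heq
  · exact hlt
  · rw [← heq, div_zero] at h
    linarith

include hnn h2nd in
lemma gam_pos (hN : 2 ≤ N) (k : ℕ) (hk : k ≤ N) : 0 < gam N p k := by
  rcases Nat.lt_or_ge k 2 with hk2 | hk2
  · have hp1 := hpp hnn h2nd 1 le_rfl (by omega)
    interval_cases k
    · rcases (gam_nonneg hnn 0).lt_or_eq with h | h
      · exact h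
      · rw [← h, mul_zero] at hp1; linarith
    · have h := h2nd 1 le_rfl (by omega)
      have hrhs : (0:ℝ) < (((1 + 1) * (N - 1 + 1) : ℕ) : ℝ) / ((1 * (N - 1) : ℕ) : ℝ) := by
        apply div_pos <;> { rw [Nat.cast_pos]; omega }
      rcases (gam_nonneg hnn 1).lt_or_eq with hg | hg
      · exact hg
      · rw [← hg] at h
        norm_num at h
        have hd : (0:ℝ) < ((N-1:ℕ):ℝ) := by rw [Nat.cast_pos]; omega
        have hpo : (0:ℝ) < 2*(((N-1:ℕ):ℝ)+1)/((N-1:ℕ):ℝ) := div_pos (by positivity) hd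
        linarith
  · have hp := hpp hnn h2nd (k-1) (by omega) (by omega)
    have he : k - 1 + 1 = k := by omega
    rw [he] at hp
    rcases (gam_nonneg hnn k).lt_or_eq with h | h
    · exact h
    · rw [← h, zero_mul] at hp; linarith

include hnn hexch h2nd in
lemma tf_pos (hN : 2 ≤ N) (k : ℕ) (hk : k ≤ N) : 0 < tf N p k := by
  have hg := gam_pos hnn h2nd hN k hk
  rw [gam_eq p hexch k] at hg
  rcases mul_pos_iff.mp hg with ⟨_, h⟩ | ⟨h, _⟩
  · exact h
  · exfalso
    have : (0:ℝ) ≤ (N.choose k : ℝ) := Nat.cast_nonneg _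
    linarith

include hnn hexch h2nd in
lemma tf_lc (i : ℕ) (h1 : 1 ≤ i) (h2 : i ≤ N - 1) :
    tf N p (i+1) * tf N p (i-1) < tf N p i * tf N p i := by
  have hN : 2 ≤ N := by omega
  have h := h2nd i h1 h2
  have hprod := hpp hnn h2nd i h1 h2
  have hden : (0:ℝ) < ((i * (N - i) : ℕ) : ℝ) := by
    rw [Nat.cast_pos]; apply Nat.mul_pos <;> omega
  rw [gt_iff_lt, div_lt_div_iff₀ hden hprod] at h
  rw [gam_eq p hexch i, gam_eq p hexch (i+1), gam_eq p hexch (i-1)] at h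
  have h1n := Nat.choose_succ_right_eq N i
  have h2n := Nat.choose_succ_right_eq N (i-1)
  rw [show i - 1 + 1 = i by omega, show N - (i-1) = N - i + 1 by omega] at h2n
  have h1R : (N.choose (i+1) : ℝ) * ((i:ℝ)+1) = (N.choose i : ℝ) * ((N - i : ℕ) : ℝ) := by
    have := congrArg (Nat.cast : ℕ → ℝ) h1n
    push_cast at this
    convert this using 2
  have h2R : (N.choose i : ℝ) * (i:ℝ) = (N.choose (i-1) : ℝ) * (((N - i : ℕ) : ℝ)+1) := by
    have := congrArg (Nat.cast : ℕ → ℝ) h2n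
    push_cast at this
    convert this using 2
  push_cast at h
  set u : ℝ := ((N - i : ℕ) : ℝ) with hu
  set a0 : ℝ := (N.choose i : ℝ)
  set a1 : ℝ := (N.choose (i+1) : ℝ)
  set a2 : ℝ := (N.choose (i-1) : ℝ)
  set t0 := tf N p i
  set t1 := tf N p (i+1)
  set t2 := tf N p (i-1)
  have hL : ((i:ℝ)+1)*(u+1) * ((a1*t1) * (a2*t2)) = (a0^2*((i:ℝ)*u)) * (t1*t2) := by
    linear_combination (t1*t2*(u+1)*a2)*h1R - (t1*t2*a0*u)*h2R
  have hRR : (a0*t0)^2*((i:ℝ)*u) = (a0^2*((i:ℝ)*u))*(t0*t0) := by ring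
  have hK : (0:ℝ) < a0^2*((i:ℝ)*u) := by
    have ha0 : (0:ℝ) < a0 := by
      rw [Nat.cast_pos]; exact Nat.choose_pos (by omega)
    have hi : (0:ℝ) < (i:ℝ) := by exact_mod_cast (show 0 < i by omega)
    have hu' : (0:ℝ) < u := by rw [hu, Nat.cast_pos]; omega
    exact mul_pos (pow_pos ha0 2) (mul_pos hi hu')
  have h' : (a0^2*((i:ℝ)*u)) * (t1*t2) < (a0^2*((i:ℝ)*u))*(t0*t0) := by
    linarith [h, hL, hRR]
  exact lt_of_mul_lt_mul_left h' (le_of_lt hK)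

include hnn hexch h2nd in
lemma tf_chain (hN : 2 ≤ N) (j k : ℕ) (hjk : j ≤ k) (hkN : k + 2 ≤ N) :
    tf N p j * tf N p (k+2) < tf N p (j+1) * tf N p (k+1) := by
  induction k, hjk using Nat.le_induction with
  | base =>
    have h := tf_lc hnn hexch h2nd (j+1) (by omega) (by omega)
    have he : j + 1 - 1 = j := by omega
    rw [he] at h
    linarith [h]
  | succ k hk IH =>
    have IH' := IH (by omega)
    have h := tf_lc hnn hexch h2nd (k+2) (by omega) (by omega)
    have he : k + 2 - 1 = k + 1 := by omega
    rw [he] at h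
    have htj := tf_pos hnn hexch h2nd hN j (by omega)
    have htk1 := tf_pos hnn hexch h2nd hN (k+1) (by omega)
    have htk2 := tf_pos hnn hexch h2nd hN (k+2) (by omega)
    have htk3 := tf_pos hnn hexch h2nd hN (k+2+1) (by omega)
    nlinarith [mul_lt_mul_of_pos_left h htj, mul_lt_mul_of_pos_right IH' htk2]

include hnn hexch h2nd in
lemma Ssum_lc (hN : 2 ≤ N) : ∀ l j k : ℕ, j ≤ k → k + l + 2 ≤ N →
    Ssum N p l j * Ssum N p l (k+2) < Ssum N p l (j+1) * Ssum N p l (k+1) := by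
  intro l
  induction l with
  | zero =>
    intro j k hjk hkN
    rw [Ssum_zero, Ssum_zero, Ssum_zero, Ssum_zero]
    exact tf_chain hnn hexch h2nd hN j k hjk (by omega)
  | succ l IH =>
    intro j k hjk hkN
    rw [Ssum_succ, Ssum_succ, Ssum_succ, Ssum_succ]
    have F1 := IH j k hjk (by omega)
    have F2 := IH (j+1) (k+1) (by omega) (by omega)
    have F3 := IH j (k+1) (by omega) (by omega)
    have F4 : Ssum N p l (j+1) * Ssum N p l (k+2) ≤ Ssum N p l (j+2) * Ssum N p l (k+1) := by
      rcases Nat.lt_or_ge j k with hlt | hge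
      · exact le_of_lt (IH (j+1) k hlt (by omega))
      · have : j = k := le_antisymm hjk hge
        subst this
        rw [mul_comm]
    linarith [F1, F2, F3, F4]

include hnn hexch h2nd in
lemma key_step (hpos : ∀ (n : ℕ) (hn : n < N), 0 < pref N p hn.le (fun _ => false : Fin n → Bool))
    (a : ℕ) (ha : a < N) (ha1 : a + 1 < N) :
    pref N p ha (Fin.snoc (fun _ => false : Fin a → Bool) true) /
        pref N p ha.le (fun _ => false : Fin a → Bool) <
      pref N p ha1 (Fin.snoc (fun _ => false : Fin (a+1) → Bool) true) /
        pref N p ha1.le (fun _ => false : Fin (a+1) → Bool) := by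
  have hN : 2 ≤ N := by omega
  have hc1 : cnt (Fin.snoc (fun _ => false : Fin a → Bool) true) = 1 := by
    rw [cnt_snoc, cnt_const_false]; rfl
  have hc1' : cnt (Fin.snoc (fun _ => false : Fin (a+1) → Bool) true) = 1 := by
    rw [cnt_snoc, cnt_const_false]; rfl
  have e1 : pref N p ha.le (fun _ => false : Fin a → Bool) = Ssum N p (N - a) 0 := by
    rw [pref_eq_Ssum p hexch ha.le, cnt_const_false]
  have e2 : pref N p ha (Fin.snoc (fun _ => false : Fin a → Bool) true)
      = Ssum N p (N - (a+1)) 1 := by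
    rw [pref_eq_Ssum p hexch (show a + 1 ≤ N by omega), hc1]
  have e3 : pref N p ha1.le (fun _ => false : Fin (a+1) → Bool) = Ssum N p (N - (a+1)) 0 := by
    rw [pref_eq_Ssum p hexch ha1.le, cnt_const_false]
  have e4 : pref N p ha1 (Fin.snoc (fun _ => false : Fin (a+1) → Bool) true)
      = Ssum N p (N - (a+2)) 1 := by
    rw [pref_eq_Ssum p hexch (show a + 2 ≤ N by omega), hc1']
  set l := N - (a + 2) with hl
  have hl1 : N - (a+1) = l + 1 := by omega
  have hl2 : N - a = l + 2 := by omega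
  rw [hl1] at e2 e3
  rw [hl2] at e1
  have hZa : 0 < Ssum N p (l+2) 0 := by rw [← e1]; exact hpos a ha
  have hZa1 : 0 < Ssum N p (l+1) 0 := by rw [← e3]; exact hpos (a+1) ha1
  have hk := Ssum_lc hnn hexch h2nd hN l 0 0 le_rfl (by omega)
  have s1 : Ssum N p (l+2) 0 = Ssum N p (l+1) 0 + Ssum N p (l+1) 1 := Ssum_succ N p (l+1) 0
  have s2 : Ssum N p (l+1) 0 = Ssum N p l 0 + Ssum N p l 1 := Ssum_succ N p l 0
  have s3 : Ssum N p (l+1) 1 = Ssum N p l 1 + Ssum N p (l) 2 := Ssum_succ N p l 1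
  rw [e1, e2, e3, e4]
  rw [div_lt_div_iff₀ hZa hZa1]
  norm_num at hk
  rw [s1, s3, s2]
  linarith [hk]

end Main

/-- Statement: if γ is 2nd-order tighter than the Binomial, then P(X_{n+1}=1 | X_1=0,...,X_n=0)
is strictly tighterly ordered (monotone) in n for 0 ≤ n ≤ N-1. -/
theorem second_order_tighter_belief_in_maturity (N : ℕ) (p : (Fin N → Bool) → ℝ)
    (hnn : ∀ y, 0 ≤ p y) (hsum : ∑ y, p y = 1)
    (hexch : ∀ σ : Equiv.Perm (Fin N), ∀ y : Fin N → Bool, p (y ∘ σ) = p y)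
    (h2nd : ∀ i : ℕ, 1 ≤ i → i ≤ N - 1 →
      gam N p i ^ 2 / (gam N p (i + 1) * gam N p (i - 1)) >
        (((i + 1) * (N - i + 1) : ℕ) : ℝ) / ((i * (N - i) : ℕ) : ℝ))
    (hpos : ∀ (n : ℕ) (hn : n < N), 0 < pref N p hn.le (fun _ => false : Fin n → Bool)) :
    ∀ (n m : ℕ) (hn : n < N) (hm : m < N), n < m →
      pref N p hn (Fin.snoc (fun _ => false : Fin n → Bool) true) /
          pref N p hn.le (fun _ => false : Fin n → Bool) <
        pref N p hm (Fin.snoc (fun _ => false : Fin m → Bool) true) /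
          pref N p hm.le (fun _ => false : Fin m → Bool) := by
  intro n m hn hm hnm
  induction m with
  | zero => omega
  | succ m IH =>
    rcases Nat.lt_or_ge n m with h | h
    · have hm' : m < N := by omega
      exact lt_trans (IH hm' h) (key_step hnn hexch h2nd hpos m hm' hm)
    · have : n = m := by omega
      subst this
      exact key_step hnn hexch h2nd hpos n hn hm
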